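/- Let q be a uniquely distinguishable state of an NFA 𝒜 = (Q, Σ, δ, s, F), and suppose there is a letter a ∈ Σ and exactly one state p ∈ Q with q ∈ δ(p, a) (i.e., (p, a, q) is a unique in-transition on a going to q). Then p is uniquely distinguishable as well. -/

import Mathlib

lemma mem_evalFrom_aux {α σ : Type*} (A : NFA α σ) (w : List α) (S : Set σ) (x : σ) :
    x ∈ A.evalFrom S w ↔ ∃ s ∈ S, x ∈ A.evalFrom {s} w := by
  induction w generalizing S with
  | nil => simp [NFA.evalFrom]
  | cons a w ih =>
    show x ∈ A.evalFrom (A.stepSet S a) w ↔ ∃ s ∈ S, x ∈ A.evalFrom (A.stepSet {s} a) w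
    rw [ih]
    constructor
    · rintro ⟨t, ht, hx⟩
      rw [NFA.mem_stepSet] at ht
      obtain ⟨s, hs, ht⟩ := ht
      refine ⟨s, hs, (ih _).mpr ⟨t, ?_, hx⟩⟩
      rw [NFA.mem_stepSet]
      exact ⟨s, rfl, ht⟩
    · rintro ⟨s, hs, hx⟩
      rw [ih] at hx
      obtain ⟨t, ht, hx⟩ := hx
      rw [NFA.mem_stepSet] at ht
      obtain ⟨u, hu, ht⟩ := ht
      rcases hu with rfl
      exact ⟨t, (A.mem_stepSet).mpr ⟨u, hs, ht⟩, hx⟩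

/-- If `q` is a uniquely distinguishable state of an NFA `𝒜` and `(p, a, q)` is the
unique in-transition on the letter `a` going to `q`, then `p` is uniquely
distinguishable as well. -/
theorem stmt_15 {α σ : Type*} (A : NFA α σ) (q : σ)
    (hq : ∃ w : List α,
      ∀ r : σ, (A.evalFrom {r} w ∩ A.accept).Nonempty ↔ r = q)
    (a : α) (p : σ) (hpq : q ∈ A.step p a)
    (huniq : ∀ r : σ, q ∈ A.step r a → r = p) :
    ∃ w : List α,
      ∀ r : σ, (A.evalFrom {r} w ∩ A.accept).Nonempty ↔ r = p := by
  obtain ⟨w, hw⟩ := hq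
  refine ⟨a :: w, fun r => ?_⟩
  have heval : A.evalFrom {r} (a :: w) = A.evalFrom (A.step r a) w := by
    have hst : A.stepSet {r} a = A.step r a := by
      ext x; simp [NFA.mem_stepSet]
    show A.evalFrom (A.stepSet {r} a) w = _
    rw [hst]
  rw [heval]
  constructor
  · rintro ⟨x, hx, hacc⟩
    rw [mem_evalFrom_aux] at hx
    obtain ⟨t, ht, hx⟩ := hx
    have : t = q := (hw t).mp ⟨x, hx, hacc⟩
    exact huniq r (this ▸ ht)
  · rintro rfl
    obtain ⟨x, hx, hacc⟩ := (hw q).mpr rfl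
    exact ⟨x, (mem_evalFrom_aux A w _ x).mpr ⟨q, hpq, hx⟩, hacc⟩
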